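/- Let 0 < r < u. Then lim_{ε→0⁺} ∫₀^∞ e^{−εk} k² j₁(kr) j₀(ku) dk = 1/(r³ − r u²) + arctanh(r/u)/(r² u), where for each ε > 0 the integrand is Lebesgue integrable on (0, ∞). That is, the (Abel-regularized) integral ∫₀^∞ k² j₁(kr) j₀(ku) dk for u > r equals 1/(r³ − r u²) + arctanh(r/u)/(r² u). -/

import Mathlib

open Real MeasureTheory Set Filter

lemma intA_integrable {ε : ℝ} (c : ℝ) (hε : 0 < ε) :
    IntegrableOn (fun k : ℝ => Real.exp (-(ε * k)) * Real.sin (c * k)) (Set.Ioi 0) := by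
  apply Integrable.mono' ((exp_neg_integrableOn_Ioi 0 hε))
  · exact (((Real.continuous_exp.comp (continuous_const.mul continuous_id).neg)).mul
      (Real.continuous_sin.comp (continuous_const.mul continuous_id))).aestronglyMeasurable
  · filter_upwards with k
    rw [norm_mul, Real.norm_eq_abs, Real.norm_eq_abs, abs_exp, neg_mul]
    calc Real.exp (-(ε * k)) * |Real.sin (c * k)| ≤ Real.exp (-(ε * k)) * 1 :=
          mul_le_mul_of_nonneg_left (abs_sin_le_one _) (le_of_lt (Real.exp_pos _))
      _ = Real.exp (-(ε * k)) := mul_one _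

lemma intA {ε : ℝ} (c : ℝ) (hε : 0 < ε) :
    ∫ k in Set.Ioi (0:ℝ), Real.exp (-(ε * k)) * Real.sin (c * k)
      = c / (ε ^ 2 + c ^ 2) := by
  have hD : (0:ℝ) < ε ^ 2 + c ^ 2 := by positivity
  set F : ℝ → ℝ := fun k =>
    -(Real.exp (-(ε * k)) * (ε * Real.sin (c * k) + c * Real.cos (c * k))) / (ε ^ 2 + c ^ 2)
    with hF
  have hderiv : ∀ x ∈ Set.Ici (0:ℝ), HasDerivAt F (Real.exp (-(ε * x)) * Real.sin (c * x)) x := by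
    intro x _
    have he : HasDerivAt (fun k : ℝ => Real.exp (-(ε * k))) (-ε * Real.exp (-(ε * x))) x := by
      have h1 : HasDerivAt (fun k : ℝ => -(ε * k)) (-ε) x := by
        simpa [Pi.neg_def] using ((hasDerivAt_id x).const_mul ε).neg
      simpa [mul_comm, Function.comp_def] using (Real.hasDerivAt_exp (-(ε * x))).comp x h1
    have hs : HasDerivAt (fun k : ℝ => Real.sin (c * k)) (c * Real.cos (c * x)) x := by
      have h1 : HasDerivAt (fun k : ℝ => c * k) c x := by
        simpa using (hasDerivAt_id x).const_mul c
      simpa [mul_comm, Function.comp_def] using (Real.hasDerivAt_sin (c * x)).comp x h1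
    have hc : HasDerivAt (fun k : ℝ => Real.cos (c * k)) (-(c * Real.sin (c * x))) x := by
      have h1 : HasDerivAt (fun k : ℝ => c * k) c x := by
        simpa using (hasDerivAt_id x).const_mul c
      simpa [mul_comm, Function.comp_def] using (Real.hasDerivAt_cos (c * x)).comp x h1
    have := (((he.mul ((hs.const_mul ε).add (hc.const_mul c))).neg).div_const (ε ^ 2 + c ^ 2))
    refine this.congr_deriv ?_
    change -(-ε * rexp (-(ε * x)) * (ε * sin (c * x) + c * cos (c * x)) + rexp (-(ε * x)) * (ε * (c * cos (c * x)) + c * -(c * sin (c * x)))) / (ε ^ 2 + c ^ 2) = _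
    field_simp
    ring
  have htop : Filter.Tendsto F Filter.atTop (nhds 0) := by
    refine squeeze_zero_norm (a := fun k => Real.exp (-(ε * k)) * ((|ε| + |c|) / (ε ^ 2 + c ^ 2))) (fun k => ?_) ?_
    ·
      rw [hF]
      rw [Real.norm_eq_abs, abs_div, abs_neg, abs_mul, abs_exp, abs_of_pos hD, div_le_iff₀ hD]
      have : |ε * Real.sin (c * k) + c * Real.cos (c * k)| ≤ |ε| + |c| := by
        calc |ε * Real.sin (c * k) + c * Real.cos (c * k)|
            ≤ |ε * Real.sin (c * k)| + |c * Real.cos (c * k)| := abs_add_le _ _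
          _ ≤ |ε| * 1 + |c| * 1 := by
              rw [abs_mul, abs_mul]
              gcongr
              exacts [abs_sin_le_one _, abs_cos_le_one _]
          _ = |ε| + |c| := by ring
      calc Real.exp (-(ε * k)) * |ε * Real.sin (c * k) + c * Real.cos (c * k)|
          ≤ Real.exp (-(ε * k)) * (|ε| + |c|) :=
            mul_le_mul_of_nonneg_left this (Real.exp_pos _).le
        _ = Real.exp (-(ε * k)) * ((|ε| + |c|) / (ε ^ 2 + c ^ 2)) * (ε ^ 2 + c ^ 2) := by
            field_simp
    · have h1 : Filter.Tendsto (fun k : ℝ => -(ε * k)) Filter.atTop Filter.atBot := by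
        exact tendsto_neg_atTop_atBot.comp (Filter.tendsto_id.const_mul_atTop hε)
      simpa using (Real.tendsto_exp_atBot.comp h1).mul_const ((|ε| + |c|) / (ε ^ 2 + c ^ 2))
  have := integral_Ioi_of_hasDerivAt_of_tendsto' hderiv (intA_integrable c hε) htop
  rw [this, hF]
  simp
  field_simp



lemma abs_cos_sub_cos_le (x y : ℝ) : |Real.cos x - Real.cos y| ≤ |x - y| := by
  rw [Real.cos_sub_cos]
  rw [abs_mul, abs_mul]
  have h1 : |Real.sin ((x + y) / 2)| ≤ 1 := Real.abs_sin_le_one _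
  have h2 : |Real.sin ((x - y) / 2)| ≤ |(x - y) / 2| := Real.abs_sin_le_abs
  calc |(-2 : ℝ)| * |Real.sin ((x + y) / 2)| * |Real.sin ((x - y) / 2)|
      ≤ |(-2 : ℝ)| * 1 * |(x - y) / 2| := by
        gcongr
    _ = |x - y| := by
        rw [abs_div, abs_neg]
        rw [abs_of_nonneg (by norm_num : (0:ℝ) ≤ 2)]
        ring

lemma intB_integrable {ε a b : ℝ} (hε : 0 < ε) (hab : a ≤ b) :
    IntegrableOn (fun k : ℝ =>
      Real.exp (-(ε * k)) * ((Real.cos (a * k) - Real.cos (b * k)) / k)) (Set.Ioi 0) := by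
  apply Integrable.mono' (((exp_neg_integrableOn_Ioi 0 hε)).const_mul (b - a))
  · apply Measurable.aestronglyMeasurable
    fun_prop
  · filter_upwards [self_mem_ae_restrict measurableSet_Ioi] with k hk
    have hk0 : (0:ℝ) < k := hk
    rw [norm_mul, Real.norm_eq_abs, Real.norm_eq_abs, abs_exp, abs_div, abs_of_pos hk0]
    have hcos : |Real.cos (a * k) - Real.cos (b * k)| ≤ (b - a) * k := by
      calc |Real.cos (a * k) - Real.cos (b * k)| ≤ |a * k - b * k| := _root_.abs_cos_sub_cos_le _ _
        _ = |(a - b) * k| := by ring_nf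
        _ = |a - b| * |k| := abs_mul _ _
        _ = (b - a) * k := by
            rw [abs_of_pos hk0, abs_sub_comm, abs_of_nonneg (by linarith : (0:ℝ) ≤ b - a)]
    calc Real.exp (-(ε * k)) * (|Real.cos (a * k) - Real.cos (b * k)| / k)
        ≤ Real.exp (-(ε * k)) * ((b - a) * k / k) := by
          gcongr
        _ = (b - a) * Real.exp (-ε * k) := by rw [neg_mul]; field_simp

lemma intB {ε a b : ℝ} (hε : 0 < ε) (hab : a ≤ b) :
    ∫ k in Set.Ioi (0:ℝ), Real.exp (-(ε * k)) * ((Real.cos (a * k) - Real.cos (b * k)) / k)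
      = (1/2) * (Real.log (ε^2 + b^2) - Real.log (ε^2 + a^2)) := by
  have hprod : Integrable (fun z : ℝ × ℝ => Real.exp (-(ε * z.1)) * Real.sin (z.2 * z.1))
      ((volume.restrict (Set.Ioi 0)).prod (volume.restrict (Set.Ioc a b))) := by
    have hg : Integrable (fun _ : ℝ => (1:ℝ)) (volume.restrict (Set.Ioc a b)) :=
      integrableOn_const measure_Ioc_lt_top.ne
    have hf : Integrable (fun x : ℝ => Real.exp (-(ε * x))) (volume.restrict (Set.Ioi 0)) := by
      simpa [neg_mul, IntegrableOn] using exp_neg_integrableOn_Ioi 0 hε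
    apply Integrable.mono' (hf.mul_prod hg)
    · apply Measurable.aestronglyMeasurable
      fun_prop
    · filter_upwards with z
      rw [norm_mul, Real.norm_eq_abs, Real.norm_eq_abs, abs_exp, mul_one]
      exact (mul_le_mul_of_nonneg_left (Real.abs_sin_le_one _) (Real.exp_pos _).le).trans_eq
        (mul_one _)
  calc ∫ k in Set.Ioi (0:ℝ), Real.exp (-(ε * k)) * ((Real.cos (a * k) - Real.cos (b * k)) / k)
      = ∫ k in Set.Ioi (0:ℝ), ∫ t in Set.Ioc a b, Real.exp (-(ε * k)) * Real.sin (t * k) := by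
        apply setIntegral_congr_fun measurableSet_Ioi
        intro k hk
        have hk0 : (0:ℝ) < k := hk
        dsimp only
        rw [← intervalIntegral.integral_of_le hab, intervalIntegral.integral_const_mul]
        have hD : ∀ t ∈ Set.uIcc a b,
            HasDerivAt (fun t : ℝ => -Real.cos (t * k) / k) (Real.sin (t * k)) t := by
          intro t _
          have h1 : HasDerivAt (fun t : ℝ => t * k) k t := hasDerivAt_mul_const k
          have := (((Real.hasDerivAt_cos (t * k)).comp t h1).neg).div_const k
          refine this.congr_deriv ?_
          field_simp
        rw [intervalIntegral.integral_eq_sub_of_hasDerivAt hD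
          (Continuous.intervalIntegrable (by fun_prop) a b)]
        field_simp
        ring
    _ = ∫ t in Set.Ioc a b, ∫ k in Set.Ioi (0:ℝ), Real.exp (-(ε * k)) * Real.sin (t * k) :=
        integral_integral_swap hprod
    _ = ∫ t in Set.Ioc a b, t / (ε^2 + t^2) :=
        setIntegral_congr_fun measurableSet_Ioc fun t _ => intA t hε
    _ = (1/2) * (Real.log (ε^2 + b^2) - Real.log (ε^2 + a^2)) := by
        rw [← intervalIntegral.integral_of_le hab]
        have hD : ∀ t ∈ Set.uIcc a b,
            HasDerivAt (fun t : ℝ => (1/2) * Real.log (ε^2 + t^2)) (t / (ε^2 + t^2)) t := by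
          intro t _
          have hpos : (0:ℝ) < ε^2 + t^2 := by positivity
          have h1 : HasDerivAt (fun t : ℝ => ε^2 + t^2) (2 * t) t := by
            simpa using ((hasDerivAt_pow 2 t).const_add (ε^2))
          have := ((Real.hasDerivAt_log hpos.ne').comp t h1).const_mul (1/2)
          refine this.congr_deriv ?_
          field_simp
        rw [intervalIntegral.integral_eq_sub_of_hasDerivAt hD
          (Continuous.intervalIntegrable
            (continuous_id.div (by fun_prop) (fun t => by positivity)) a b)]
        ring

open Real

/-- The real inverse hyperbolic tangent on `(−1, 1)`. -/
noncomputable def arctanh (x : ℝ) : ℝ := (1 / 2) * Real.log ((1 + x) / (1 - x))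

/-- Abel-regularized integral: for `0 < r < u`, each Abel-regularized integrand
`k ↦ e^{−εk} k² j₁(kr) j₀(ku)` is Lebesgue integrable on `(0,∞)`, and
`lim_{ε→0⁺} ∫₀^∞ e^{−εk} k² j₁(kr) j₀(ku) dk = 1/(r³ − r u²) + arctanh(r/u)/(r² u)`,
where `j₀(x) = sin x / x` and `j₁(x) = sin x / x² − cos x / x`. -/
theorem abel_regularized_j1_j0 (r u : ℝ) (hr : 0 < r) (hru : r < u) :
    (∀ ε : ℝ, 0 < ε →
      MeasureTheory.IntegrableOn
        (fun k : ℝ => Real.exp (-ε * k) * (k ^ 2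
          * (Real.sin (k * r) / (k * r) ^ 2 - Real.cos (k * r) / (k * r))
          * (Real.sin (k * u) / (k * u))))
        (Set.Ioi 0)) ∧
    Filter.Tendsto
      (fun ε : ℝ => ∫ k in Set.Ioi (0 : ℝ),
        Real.exp (-ε * k) * (k ^ 2
          * (Real.sin (k * r) / (k * r) ^ 2 - Real.cos (k * r) / (k * r))
          * (Real.sin (k * u) / (k * u))))
      (nhdsWithin 0 (Set.Ioi 0))
      (nhds (1 / (r ^ 3 - r * u ^ 2) + arctanh (r / u) / (r ^ 2 * u))) := by
  have hu : 0 < u := hr.trans hru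
  have ha : (0:ℝ) < u - r := by linarith
  have hb : (0:ℝ) < u + r := by linarith
  have hab : u - r ≤ u + r := by linarith
  set c₁ : ℝ := 1 / (2 * r ^ 2 * u) with hc₁
  set c₂ : ℝ := -(1 / (2 * r * u)) with hc₂
  -- the pointwise identity on (0, ∞)
  have key : ∀ ε : ℝ, Set.EqOn
      (fun k : ℝ => c₁ * (Real.exp (-(ε * k)) * ((Real.cos ((u - r) * k)
          - Real.cos ((u + r) * k)) / k))
        + (c₂ * (Real.exp (-(ε * k)) * Real.sin ((u + r) * k))
          + c₂ * (Real.exp (-(ε * k)) * Real.sin ((u - r) * k))))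
      (fun k : ℝ => Real.exp (-ε * k) * (k ^ 2
          * (Real.sin (k * r) / (k * r) ^ 2 - Real.cos (k * r) / (k * r))
          * (Real.sin (k * u) / (k * u))))
      (Set.Ioi 0) := by
    intro ε k hk
    have hk0 : (0:ℝ) < k := hk
    dsimp only
    rw [neg_mul, show (u - r) * k = u * k - r * k by ring,
      show (u + r) * k = u * k + r * k by ring,
      Real.cos_sub, Real.cos_add, Real.sin_add, Real.sin_sub,
      mul_comm k r, mul_comm k u, hc₁, hc₂]
    field_simp
    ring
  have hint : ∀ ε : ℝ, 0 < ε → MeasureTheory.IntegrableOn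
      (fun k : ℝ => c₁ * (Real.exp (-(ε * k)) * ((Real.cos ((u - r) * k)
          - Real.cos ((u + r) * k)) / k))
        + (c₂ * (Real.exp (-(ε * k)) * Real.sin ((u + r) * k))
          + c₂ * (Real.exp (-(ε * k)) * Real.sin ((u - r) * k))))
      (Set.Ioi 0) := fun ε hε =>
    ((intB_integrable hε hab).const_mul c₁).add
      (((intA_integrable (u + r) hε).const_mul c₂).add
        ((intA_integrable (u - r) hε).const_mul c₂))
  refine ⟨fun ε hε => (hint ε hε).congr_fun (key ε) measurableSet_Ioi, ?_⟩
  -- closed-form value for each ε > 0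
  set G : ℝ → ℝ := fun ε =>
    c₁ * ((1/2) * (Real.log (ε^2 + (u + r)^2) - Real.log (ε^2 + (u - r)^2)))
      + (c₂ * ((u + r) / (ε^2 + (u + r)^2)) + c₂ * ((u - r) / (ε^2 + (u - r)^2))) with hG
  have hval : ∀ ε : ℝ, 0 < ε →
      (∫ k in Set.Ioi (0:ℝ), Real.exp (-ε * k) * (k ^ 2
          * (Real.sin (k * r) / (k * r) ^ 2 - Real.cos (k * r) / (k * r))
          * (Real.sin (k * u) / (k * u)))) = G ε := by
    intro ε hε
    rw [← MeasureTheory.setIntegral_congr_fun measurableSet_Ioi (key ε)]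
    have i2 : MeasureTheory.IntegrableOn (fun k : ℝ =>
        c₂ * (Real.exp (-(ε * k)) * Real.sin ((u + r) * k))
          + c₂ * (Real.exp (-(ε * k)) * Real.sin ((u - r) * k))) (Set.Ioi 0) :=
      ((intA_integrable (u + r) hε).const_mul c₂).add
        ((intA_integrable (u - r) hε).const_mul c₂)
    rw [MeasureTheory.integral_add ((intB_integrable hε hab).const_mul c₁) i2,
      MeasureTheory.integral_add ((intA_integrable (u + r) hε).const_mul c₂)
        ((intA_integrable (u - r) hε).const_mul c₂),
      MeasureTheory.integral_const_mul, MeasureTheory.integral_const_mul,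
      MeasureTheory.integral_const_mul, intA _ hε, intA _ hε, intB hε hab]
  -- continuity of G at 0
  have hlog : ∀ c : ℝ, c ≠ 0 → ContinuousAt (fun ε : ℝ => Real.log (ε^2 + c^2)) 0 := by
    intro c hc
    have h0 : ((0:ℝ)^2 + c^2) ≠ 0 := by positivity
    have hin : ContinuousAt (fun ε : ℝ => ε^2 + c^2) 0 := by fun_prop
    simpa [Function.comp_def] using ContinuousAt.comp (f := fun ε : ℝ => ε^2 + c^2)
      (x := (0:ℝ)) (Real.continuousAt_log h0) hin
  have hrat : ∀ c : ℝ, c ≠ 0 → ContinuousAt (fun ε : ℝ => c / (ε^2 + c^2)) 0 := by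
    intro c hc
    have h0 : ((0:ℝ)^2 + c^2) ≠ 0 := by positivity
    exact ContinuousAt.div continuousAt_const (by fun_prop) h0
  have hGc : ContinuousAt G 0 := by
    rw [hG]
    exact ((((hlog _ hb.ne').sub (hlog _ ha.ne')).const_mul (1/2)).const_mul c₁).add
      (((hrat _ hb.ne').const_mul c₂).add ((hrat _ ha.ne').const_mul c₂))
  -- value of G at 0
  have hG0 : G 0 = 1 / (r ^ 3 - r * u ^ 2) + arctanh (r / u) / (r ^ 2 * u) := by
    rw [hG]
    have h1 : (1 + r / u) / (1 - r / u) = (u + r) / (u - r) := by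
      have hden : (1 : ℝ) - r / u ≠ 0 := by
        have : r / u < 1 := (div_lt_one hu).2 hru
        linarith
      rw [div_eq_div_iff hden ha.ne']
      field_simp
    have h2 : Real.log ((0:ℝ)^2 + (u + r)^2) = 2 * Real.log (u + r) := by
      rw [show (0:ℝ)^2 + (u + r)^2 = (u + r)^2 by ring, Real.log_pow]
      norm_num
    have h3 : Real.log ((0:ℝ)^2 + (u - r)^2) = 2 * Real.log (u - r) := by
      rw [show (0:ℝ)^2 + (u - r)^2 = (u - r)^2 by ring, Real.log_pow]
      norm_num
    simp only [arctanh]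
    rw [h1, Real.log_div hb.ne' ha.ne', h2, h3, hc₁, hc₂]
    have e1 : (0:ℝ)^2 + (u+r)^2 = (u+r)^2 := by ring
    have e2 : (0:ℝ)^2 + (u-r)^2 = (u-r)^2 := by ring
    rw [e1, e2]
    have hne : r ^ 3 - r * u ^ 2 ≠ 0 := by nlinarith [mul_pos hr (mul_pos ha hb)]
    have hne2 : r ^ 2 - u ^ 2 ≠ 0 := by nlinarith [mul_pos hr (mul_pos ha hb)]
    field_simp [hne, hne2]
    ring
  have hGt : Filter.Tendsto G (nhdsWithin 0 (Set.Ioi 0))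
      (nhds (1 / (r ^ 3 - r * u ^ 2) + arctanh (r / u) / (r ^ 2 * u))) := by
    rw [← hG0]
    exact hGc.tendsto.mono_left nhdsWithin_le_nhds
  apply hGt.congr'
  filter_upwards [self_mem_nhdsWithin] with ε hε
  exact (hval ε hε).symm
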